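/- For every m ≥ 1, if A, B, C are iid uniform on the set {1, 2, 4, ..., 2^(m-1)} (m distinct powers of 2, each with probability 1/m), then P(2A < B + C) ≥ 2/3 - 3/m. -/

import Mathlib

open MeasureTheory ENNReal

section AuxStmt7
open Finset

lemma six_sum_sq (m : ℕ) : 6 * ∑ i ∈ Finset.range m, (i+1)^2 = 2*m^3+3*m^2+m := by
  induction m with
  | zero => simp
  | succ n ih => rw [Finset.sum_range_succ, Nat.mul_add, ih]; ring

lemma count_le (i m : ℕ) (him : i < m) :
    (∑ j ∈ Finset.range m, ∑ k ∈ Finset.range m,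
      (if i < j ∨ i < k then 1 else 0)) + (i+1)^2 = m^2 := by
  have h1 : (∑ j ∈ Finset.range m, (if j ≤ i then (1:ℕ) else 0)) = i + 1 := by
    rw [Finset.sum_boole]
    have : (Finset.range m).filter (fun j => j ≤ i) = Finset.range (i+1) := by
      ext j; simp; omega
    simp [this]
  have key : ∀ j k : ℕ, (if i < j ∨ i < k then (1:ℕ) else 0)
      + (if j ≤ i then (1:ℕ) else 0) * (if k ≤ i then 1 else 0) = 1 := by
    intro j k; split_ifs <;> omega
  have h2 : (∑ j ∈ Finset.range m, ∑ k ∈ Finset.range m,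
      ((if i < j ∨ i < k then (1:ℕ) else 0)
        + (if j ≤ i then (1:ℕ) else 0) * (if k ≤ i then 1 else 0))) = m^2 := by
    simp_rw [key]; simp [sq]
  rw [← h2]
  simp_rw [Finset.sum_add_distrib]
  congr 1
  rw [← Finset.sum_mul_sum, h1, sq]

lemma pi_eq_aux (m : ℕ) :
    Measure.pi (fun _ : Fin 3 => ((m : ℝ≥0∞)⁻¹ • ∑ i ∈ Finset.range m, Measure.dirac ((2 : ℝ) ^ i))) =
      ((m : ℝ≥0∞)⁻¹)^3 • ∑ f ∈ Fintype.piFinset (fun _ : Fin 3 => Finset.range m),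
        Measure.dirac (fun t : Fin 3 => (2:ℝ)^(f t)) := by
  haveI : IsFiniteMeasure ((m : ℝ≥0∞)⁻¹ • ∑ i ∈ Finset.range m, Measure.dirac ((2 : ℝ) ^ i)) := by
    constructor
    have : (((m : ℝ≥0∞)⁻¹ • ∑ i ∈ Finset.range m, Measure.dirac ((2 : ℝ) ^ i))) Set.univ
        = (m : ℝ≥0∞)⁻¹ * m := by
      simp [Measure.smul_apply]
    rw [this, mul_comm]
    exact lt_of_le_of_lt (ENNReal.mul_inv_le_one _) one_lt_top
  refine Measure.pi_eq ?_
  intro s hs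
  have hsm : MeasurableSet (Set.pi Set.univ s) := MeasurableSet.univ_pi hs
  simp only [Measure.smul_apply, Measure.coe_finset_sum, Finset.sum_apply, smul_eq_mul,
    Measure.dirac_apply' _ hsm, Measure.dirac_apply' _ (hs _)]
  classical
  simp only [Set.indicator_apply, Set.mem_univ_pi, Pi.one_apply]
  rw [Finset.prod_mul_distrib, Finset.prod_const, Finset.prod_univ_sum]
  congr 1
  refine (Finset.sum_congr rfl fun f hf => ?_).symm
  by_cases h : ∀ t : Fin 3, (2:ℝ)^(f t) ∈ s t
  · rw [if_pos h, Finset.prod_congr rfl fun t _ => if_pos (h t)]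
    simp
  · rw [if_neg h]
    push_neg at h
    obtain ⟨t, ht⟩ := h
    exact Finset.prod_eq_zero (Finset.mem_univ t) (if_neg ht)

lemma arith_aux (m T : ℕ) (hm : 1 ≤ m)
    (hTQ : T + (∑ i ∈ Finset.range m, (i+1)^2) = m^3) :
    2 * m^3 ≤ 3 * T + 9 * m^2 := by
  have h6 := six_sum_sq m
  have hm2 : m ≤ m^2 := Nat.le_self_pow (by norm_num) m
  have hm3 : m^2 ≤ m^3 := Nat.pow_le_pow_right (by omega) (by norm_num)
  omega

end AuxStmt7

/-- For every m ≥ 1, if A, B, C are iid uniform on the m distinct values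
{2^0, 2^1, ..., 2^(m-1)}, then P(2A < B + C) ≥ 2/3 - 3/m. -/
theorem stmt7 (m : ℕ) (hm : 1 ≤ m)
    (μ : Measure ℝ)
    (hμ : μ = (m : ℝ≥0∞)⁻¹ • ∑ i ∈ Finset.range m, Measure.dirac ((2 : ℝ) ^ i)) :
    2 / 3 - 3 / (m : ℝ≥0∞) ≤
      (Measure.pi fun _ : Fin 3 => μ) {x | 2 * x 0 < x 1 + x 2} := by
  classical
  subst hμ
  rw [pi_eq_aux m]
  have hS : MeasurableSet {x : Fin 3 → ℝ | 2 * x 0 < x 1 + x 2} := by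
    apply measurableSet_lt
    · exact (measurable_pi_apply 0).const_mul 2
    · exact (measurable_pi_apply 1).add (measurable_pi_apply 2)
  rw [Measure.smul_apply]
  rw [show ((∑ f ∈ Fintype.piFinset (fun _ : Fin 3 => Finset.range m),
        Measure.dirac (fun t : Fin 3 => (2:ℝ)^(f t))) {x | 2 * x 0 < x 1 + x 2})
      = ∑ f ∈ Fintype.piFinset (fun _ : Fin 3 => Finset.range m),
        (if 2 * (2:ℝ)^(f 0) < (2:ℝ)^(f 1) + (2:ℝ)^(f 2) then (1:ℝ≥0∞) else 0) from ?_]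
  swap
  · rw [Measure.coe_finset_sum, Finset.sum_apply]
    refine Finset.sum_congr rfl fun f hf => ?_
    rw [Measure.dirac_apply' _ hS, Set.indicator_apply]
    simp [Set.mem_setOf_eq]
  -- lower bound the boolean sum by the simpler condition
  have hineq : ∀ f : Fin 3 → ℕ,
      (if f 0 < f 1 ∨ f 0 < f 2 then (1:ℝ≥0∞) else 0)
        ≤ (if 2 * (2:ℝ)^(f 0) < (2:ℝ)^(f 1) + (2:ℝ)^(f 2) then (1:ℝ≥0∞) else 0) := by
    intro f
    split_ifs with h1 h2
    · exact le_rfl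
    · exfalso; apply h2
      rcases h1 with h | h
      · calc 2 * (2:ℝ)^(f 0) = 2^(f 0 + 1) := by ring
          _ ≤ 2^(f 1) := pow_le_pow_right₀ one_le_two h
          _ < 2^(f 1) + 2^(f 2) := lt_add_of_pos_right _ (by positivity)
      · calc 2 * (2:ℝ)^(f 0) = 2^(f 0 + 1) := by ring
          _ ≤ 2^(f 2) := pow_le_pow_right₀ one_le_two h
          _ < 2^(f 1) + 2^(f 2) := lt_add_of_pos_left _ (by positivity)
    · exact zero_le
    · exact zero_le
  refine le_trans ?_ (mul_le_mul_right (Finset.sum_le_sum fun f _ => hineq f) _)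
  -- turn the boolean sum into a natural number count
  have hcount : (∑ f ∈ Fintype.piFinset (fun _ : Fin 3 => Finset.range m),
      (if f 0 < f 1 ∨ f 0 < f 2 then (1:ℝ≥0∞) else 0))
      = ((∑ f ∈ Fintype.piFinset (fun _ : Fin 3 => Finset.range m),
          (if f 0 < f 1 ∨ f 0 < f 2 then (1:ℕ) else 0) : ℕ) : ℝ≥0∞) := by
    push_cast
    exact Finset.sum_congr rfl fun f _ => by split_ifs <;> simp
  rw [hcount]
  -- reindex to a triple sum
  have hreindex : (∑ f ∈ Fintype.piFinset (fun _ : Fin 3 => Finset.range m),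
      (if f 0 < f 1 ∨ f 0 < f 2 then (1:ℕ) else 0))
      = ∑ i ∈ Finset.range m, ∑ j ∈ Finset.range m, ∑ k ∈ Finset.range m,
        (if i < j ∨ i < k then 1 else 0) := by
    rw [show (∑ i ∈ Finset.range m, ∑ j ∈ Finset.range m, ∑ k ∈ Finset.range m,
        (if i < j ∨ i < k then (1:ℕ) else 0))
      = ∑ p ∈ (Finset.range m) ×ˢ (Finset.range m) ×ˢ (Finset.range m),
        (if p.1 < p.2.1 ∨ p.1 < p.2.2 then (1:ℕ) else 0) from by
        rw [Finset.sum_product]; exact Finset.sum_congr rfl fun i _ => by rw [Finset.sum_product]]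
    refine Finset.sum_nbij' (fun f => (f 0, f 1, f 2)) (fun p => ![p.1, p.2.1, p.2.2]) ?_ ?_ ?_ ?_ ?_
    · intro f hf
      simp only [Fintype.mem_piFinset] at hf
      simp [Finset.mem_product, hf 0, hf 1, hf 2]
    · intro p hp
      simp only [Finset.mem_product] at hp
      simp only [Fintype.mem_piFinset]
      intro t
      fin_cases t <;> simp [hp.1, hp.2.1, hp.2.2]
    · intro f hf
      funext t
      fin_cases t <;> simp
    · intro p hp
      simp
    · intro f hf
      rfl
  rw [hreindex]
  set T : ℕ := ∑ i ∈ Finset.range m, ∑ j ∈ Finset.range m, ∑ k ∈ Finset.range m,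
        (if i < j ∨ i < k then 1 else 0) with hT
  clear_value T
  have hTQ : T + (∑ i ∈ Finset.range m, (i+1)^2) = m^3 := by
    rw [hT]
    calc (∑ i ∈ Finset.range m, ∑ j ∈ Finset.range m, ∑ k ∈ Finset.range m,
            (if i < j ∨ i < k then 1 else 0)) + (∑ i ∈ Finset.range m, (i+1)^2)
        = ∑ i ∈ Finset.range m, ((∑ j ∈ Finset.range m, ∑ k ∈ Finset.range m,
            (if i < j ∨ i < k then 1 else 0)) + (i+1)^2) := (Finset.sum_add_distrib).symm
      _ = ∑ _i ∈ Finset.range m, m^2 :=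
          Finset.sum_congr rfl fun i hi => count_le i m (Finset.mem_range.mp hi)
      _ = m^3 := by simp [pow_succ]; ring
  -- final arithmetic
  have hnat : 2 * m^3 ≤ 3 * T + 9 * m^2 := arith_aux m T hm hTQ
  -- goal: 2/3 - 3/m ≤ m⁻¹^3 * T
  have hm0 : (m : ℝ≥0∞) ≠ 0 := by exact_mod_cast Nat.cast_ne_zero.mpr (Nat.one_le_iff_ne_zero.mp hm)
  have hmtop : (m : ℝ≥0∞) ≠ ⊤ := natCast_ne_top m
  rw [tsub_le_iff_right]
  have e1 : ((m : ℝ≥0∞)⁻¹)^3 * T = (T : ℝ≥0∞) / (m:ℝ≥0∞)^3 := by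
    rw [← ENNReal.inv_pow, div_eq_mul_inv, mul_comm]
  have e2 : (3:ℝ≥0∞) / m = (3 * m^2) / m^3 := by
    have : (3:ℝ≥0∞) * m^2 / m^3 = (m^2 * 3) / (m^2 * m) := by ring_nf
    rw [this, ENNReal.mul_div_mul_left _ _ (pow_ne_zero 2 hm0) (ENNReal.pow_ne_top hmtop)]
  rw [e1, e2, ENNReal.div_add_div_same]
  rw [ENNReal.le_div_iff_mul_le (Or.inl (pow_ne_zero 3 hm0)) (Or.inl (ENNReal.pow_ne_top hmtop))]
  rw [mul_comm, div_eq_mul_inv, ← mul_assoc, ← div_eq_mul_inv,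
    ENNReal.div_le_iff_le_mul (Or.inl (by norm_num)) (Or.inl (by norm_num))]
  calc (m:ℝ≥0∞)^3 * 2 = ((2 * m^3 : ℕ) : ℝ≥0∞) := by push_cast; ring
    _ ≤ ((3 * T + 9 * m^2 : ℕ) : ℝ≥0∞) := by exact_mod_cast hnat
    _ = ((T:ℝ≥0∞) + 3 * (m:ℝ≥0∞)^2) * 3 := by push_cast; ring
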